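/- Let ℓ ≥ 3 be an odd integer, let v ∈ C be a primitive ℓ-th root of unity, and let a be an integer with 0 ≤ a ≤ 2ℓ. Then in the polynomial ring C[x] one has P_a(x) · P_{2ℓ−a}(x) = P_{2ℓ}(x), where P_m are the idivided-power polynomials at v. (This is the second identity of Lemma 7.3 / lem:prodBB of the paper, stated as B_i^{[a]} B_i^{[2ℓ−a]} = B_i^{[2ℓ]} in the split rank-one iquantum group at v, where B_i generates a free polynomial algebra and B_i^{[m]} = P_m(B_i).) -/

import Mathlib

open Polynomial

/-- The quantum integer `[m]_q = (q^m - q^{-m})/(q - q^{-1})`. -/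
noncomputable def qInt (q : ℂ) (m : ℕ) : ℂ := (q ^ m - q⁻¹ ^ m) / (q - q⁻¹)

/-- The idivided-power polynomials at `v`:
`P_{2k}(x) = ∏_{r=1}^{k} (x² + (v - v⁻¹)² [2r-1]_v²)` and
`P_{2k+1}(x) = x ∏_{r=1}^{k} (x² + (v - v⁻¹)² [2r]_v²)`. -/
noncomputable def iDP (v : ℂ) (m : ℕ) : Polynomial ℂ :=
  if m % 2 = 0 then
    ∏ r ∈ Finset.range (m / 2), (X ^ 2 + C ((v - v⁻¹) ^ 2 * qInt v (2 * r + 1) ^ 2))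
  else
    X * ∏ r ∈ Finset.range (m / 2), (X ^ 2 + C ((v - v⁻¹) ^ 2 * qInt v (2 * r + 2) ^ 2))

/-- The quadratic factor appearing in `iDP`. -/
noncomputable def Fp (v : ℂ) (m : ℕ) : Polynomial ℂ :=
  X ^ 2 + C ((v - v⁻¹) ^ 2 * qInt v m ^ 2)

lemma iDP_even (v : ℂ) (k : ℕ) :
    iDP v (2 * k) = ∏ r ∈ Finset.range k, Fp v (2 * r + 1) := by
  have h1 : (2 * k) % 2 = 0 := by omega
  have h2 : (2 * k) / 2 = k := by omega
  simp [iDP, Fp, h1, h2]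

lemma iDP_odd (v : ℂ) (k : ℕ) :
    iDP v (2 * k + 1) = X * ∏ r ∈ Finset.range k, Fp v (2 * r + 2) := by
  have h1 : (2 * k + 1) % 2 = 1 := by omega
  have h2 : (2 * k + 1) / 2 = k := by omega
  simp [iDP, Fp, h1, h2]

lemma qInt_rev (v : ℂ) (hv0 : v ≠ 0) {n : ℕ} (hv : v ^ n = 1) {m : ℕ} (hm : m ≤ n) :
    qInt v (n - m) = - qInt v m := by
  have h0 : v⁻¹ ≠ 0 := inv_ne_zero hv0
  have hvi : v⁻¹ ^ n = 1 := by rw [inv_pow, hv, inv_one]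
  have h1 : v ^ (n - m) = v⁻¹ ^ m := by
    rw [pow_sub₀ v hv0 hm, hv, inv_pow]
    simp
  have h2 : v⁻¹ ^ (n - m) = v ^ m := by
    rw [pow_sub₀ v⁻¹ h0 hm, hvi]
    simp
  unfold qInt
  rw [h1, h2]
  ring

lemma qInt_period (v : ℂ) {n : ℕ} (hv : v ^ n = 1) (m : ℕ) :
    qInt v (n + m) = qInt v m := by
  have hvi : v⁻¹ ^ n = 1 := by rw [inv_pow, hv, inv_one]
  unfold qInt
  rw [pow_add, pow_add, hv, hvi, one_mul, one_mul]

lemma qInt_root (v : ℂ) {n : ℕ} (hv : v ^ n = 1) : qInt v n = 0 := by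
  have hvi : v⁻¹ ^ n = 1 := by rw [inv_pow, hv, inv_one]
  unfold qInt
  rw [hv, hvi]
  simp

lemma Fp_rev (v : ℂ) (hv0 : v ≠ 0) {n : ℕ} (hv : v ^ n = 1) {m : ℕ} (hm : m ≤ n) :
    Fp v (n - m) = Fp v m := by
  unfold Fp
  rw [qInt_rev v hv0 hv hm, neg_sq]

lemma Fp_period (v : ℂ) {n : ℕ} (hv : v ^ n = 1) (m : ℕ) :
    Fp v (n + m) = Fp v m := by
  unfold Fp
  rw [qInt_period v hv m]

lemma Fp_root (v : ℂ) {n : ℕ} (hv : v ^ n = 1) : Fp v n = X ^ 2 := by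
  unfold Fp
  rw [qInt_root v hv]
  simp

/-- Key product-reindexing lemma: if `G` is symmetric about the middle of `range n`,
then the product over `range k` times the product over `range (n-k)` equals the
product over `range n`. -/
lemma key_prod {M : Type*} [CommMonoid M] (G : ℕ → M) (n k : ℕ) (hk : k ≤ n)
    (hsym : ∀ r < n, G r = G (n - 1 - r)) :
    (∏ r ∈ Finset.range k, G r) * ∏ r ∈ Finset.range (n - k), G r
      = ∏ r ∈ Finset.range n, G r := by
  have h1 : ∏ r ∈ Finset.range n, G r
      = (∏ r ∈ Finset.range k, G r) * ∏ j ∈ Finset.range (n - k), G (k + j) := by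
    conv_lhs => rw [show n = k + (n - k) from by omega]
    rw [Finset.prod_range_add]
  rw [h1]
  congr 1
  calc ∏ j ∈ Finset.range (n - k), G j
      = ∏ j ∈ Finset.range (n - k), G (n - k - 1 - j) :=
        (Finset.prod_range_reflect G (n - k)).symm
    _ = ∏ j ∈ Finset.range (n - k), G (k + j) := by
        apply Finset.prod_congr rfl
        intro j hj
        simp only [Finset.mem_range] at hj
        rw [hsym (k + j) (by omega)]
        congr 1
        omega

/-- Second identity of Lemma 7.3 (lem:prodBB): for an odd `ℓ ≥ 3`, a primitive `ℓ`-th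
root of unity `v`, and `0 ≤ a ≤ 2ℓ`, one has `P_a · P_{2ℓ-a} = P_{2ℓ}` in `ℂ[x]`
(i.e. `B_i^{[a]} B_i^{[2ℓ-a]} = B_i^{[2ℓ]}` in the split rank-one iquantum group at `v`). -/
theorem iDP_mul_self_two_ell (ℓ : ℕ) (hodd : Odd ℓ) (hl : 3 ≤ ℓ) (v : ℂ)
    (hv : IsPrimitiveRoot v ℓ) (a : ℕ) (ha : a ≤ 2 * ℓ) :
    iDP v a * iDP v (2 * ℓ - a) = iDP v (2 * ℓ) := by
  have hv1 : v ^ ℓ = 1 := hv.pow_eq_one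
  have hv0 : v ≠ 0 := hv.ne_zero (by omega)
  have hv2 : v ^ (2 * ℓ) = 1 := by rw [mul_comm, pow_mul, hv1, one_pow]
  rcases Nat.even_or_odd a with ha2 | ha2
  · -- a even
    obtain ⟨k, hk⟩ := ha2
    have hk' : a = 2 * k := by omega
    have hkl : k ≤ ℓ := by omega
    rw [hk', show 2 * ℓ - 2 * k = 2 * (ℓ - k) from by omega,
      iDP_even, iDP_even, iDP_even]
    exact key_prod (fun r => Fp v (2 * r + 1)) ℓ k hkl (fun r hr => by
      show Fp v (2 * r + 1) = Fp v (2 * (ℓ - 1 - r) + 1)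
      rw [← Fp_rev v hv0 hv2 (show 2 * r + 1 ≤ 2 * ℓ by omega)]
      congr 1
      omega)
  · -- a odd
    obtain ⟨k, hk⟩ := ha2
    have hkl : k ≤ ℓ - 1 := by omega
    obtain ⟨h, hh⟩ := hodd
    rw [hk, show 2 * ℓ - (2 * k + 1) = 2 * (ℓ - 1 - k) + 1 from by omega,
      iDP_odd, iDP_odd, iDP_even]
    have hsymH : ∀ r < ℓ - 1, Fp v (2 * r + 2) = Fp v (2 * (ℓ - 1 - 1 - r) + 2) := by
      intro r hr
      rw [← Fp_rev v hv0 hv2 (show 2 * r + 2 ≤ 2 * ℓ by omega)]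
      congr 1
      omega
    have hL : (∏ r ∈ Finset.range k, Fp v (2 * r + 2)) *
        ∏ r ∈ Finset.range (ℓ - 1 - k), Fp v (2 * r + 2)
        = ∏ r ∈ Finset.range (ℓ - 1), Fp v (2 * r + 2) :=
      key_prod (fun r => Fp v (2 * r + 2)) (ℓ - 1) k hkl hsymH
    have hsplit : ∏ r ∈ Finset.range ℓ, Fp v (2 * r + 1)
        = (∏ r ∈ Finset.range h, Fp v (2 * r + 1)) *
          ∏ j ∈ Finset.range (h + 1), Fp v (2 * (h + j) + 1) := by
      conv_lhs => rw [show ℓ = h + (h + 1) from by omega]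
      rw [Finset.prod_range_add]
    have hsecond : ∏ j ∈ Finset.range (h + 1), Fp v (2 * (h + j) + 1)
        = (∏ j ∈ Finset.range h, Fp v (2 * j + 2)) * X ^ 2 := by
      rw [Finset.prod_range_succ']
      refine congrArg₂ (· * ·) ?_ ?_
      · apply Finset.prod_congr rfl
        intro j _
        rw [show 2 * (h + (j + 1)) + 1 = ℓ + (2 * j + 2) from by omega,
          Fp_period v hv1]
      · rw [show 2 * (h + 0) + 1 = ℓ from by omega]
        exact Fp_root v hv1
    have hfirst : ∏ r ∈ Finset.range h, Fp v (2 * r + 1)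
        = ∏ r ∈ Finset.range h, Fp v (2 * r + 2) := by
      rw [← Finset.prod_range_reflect (fun r => Fp v (2 * r + 2)) h]
      apply Finset.prod_congr rfl
      intro r hr
      simp only [Finset.mem_range] at hr
      rw [← Fp_rev v hv0 hv1 (show 2 * r + 1 ≤ ℓ by omega)]
      congr 1
      omega
    have hdouble : (∏ r ∈ Finset.range h, Fp v (2 * r + 2)) *
        ∏ r ∈ Finset.range h, Fp v (2 * r + 2)
        = ∏ r ∈ Finset.range (ℓ - 1), Fp v (2 * r + 2) := by
      have := key_prod (fun r => Fp v (2 * r + 2)) (ℓ - 1) h (by omega) hsymH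
      simpa only [show ℓ - 1 - h = h from by omega] using this
    have hR : ∏ r ∈ Finset.range ℓ, Fp v (2 * r + 1)
        = X ^ 2 * ∏ r ∈ Finset.range (ℓ - 1), Fp v (2 * r + 2) := by
      rw [hsplit, hsecond, hfirst, ← hdouble]
      ring
    rw [hR, ← hL]
    ring
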